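/- For every k ≥ 3, the standard example S_k has local dimension exactly 3. -/

import Mathlib

/-- `L` is a realizer of the order `le`: a family of linear extensions of `le`
whose intersection is `le`. -/
def IsRealizer {X : Type*} (le : X → X → Prop) {d : ℕ} (L : Fin d → X → X → Prop) : Prop :=
  (∀ i, IsLinearOrder X (L i)) ∧ (∀ (i) (x y : X), le x y → L i x y) ∧
    (∀ x y : X, le x y ↔ ∀ i, L i x y)

/-- The (Dushnik–Miller) dimension of a poset: the least size of a realizer. -/
noncomputable def orderDim (X : Type*) [PartialOrder X] : ℕ :=
  sInf {d : ℕ | ∃ L : Fin d → X → X → Prop, IsRealizer (· ≤ ·) L}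

/-- `L` together with the boolean function `φ` is a boolean realizer of `le`. -/
def IsBooleanRealizer {X : Type*} (le : X → X → Prop) {d : ℕ}
    (L : Fin d → X → X → Prop) (φ : (Fin d → Prop) → Prop) : Prop :=
  (∀ i, IsLinearOrder X (L i)) ∧ ∀ x y : X, le x y ↔ φ (fun i => L i x y)

/-- Boolean dimension of a relation. -/
noncomputable def booleanDimRel {X : Type*} (le : X → X → Prop) : ℕ :=
  sInf {d : ℕ | ∃ (L : Fin d → X → X → Prop) (φ : (Fin d → Prop) → Prop),
    IsBooleanRealizer le L φ}

/-- Boolean dimension of a poset. -/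
noncomputable def booleanDim (X : Type*) [PartialOrder X] : ℕ :=
  booleanDimRel ((· ≤ ·) : X → X → Prop)

/-- A partial linear extension of `le`: a linear order on a subset of `X`
extending the restriction of `le` to that subset. -/
structure PLE {X : Type*} (le : X → X → Prop) where
  dom : Set X
  rel : X → X → Prop
  mem_left : ∀ x y, rel x y → x ∈ dom
  mem_right : ∀ x y, rel x y → y ∈ dom
  refl : ∀ x ∈ dom, rel x x
  antisymm : ∀ x y, rel x y → rel y x → x = y
  trans : ∀ x y z, rel x y → rel y z → rel x z
  total : ∀ x ∈ dom, ∀ y ∈ dom, rel x y ∨ rel y x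
  le_imp : ∀ x ∈ dom, ∀ y ∈ dom, le x y → rel x y

/-- A family of partial linear extensions is a local realizer of `le`:
`x ≤ y` iff no member reverses the pair strictly. -/
def IsLocalRealizer {X : Type*} {le : X → X → Prop} {ι : Type*} (L : ι → PLE le) : Prop :=
  ∀ x y : X, le x y ↔ ∀ i, ¬ ((L i).rel y x ∧ y ≠ x)

/-- Every element of `X` occurs in the domain of at most `d` members of the family. -/
def WidthAtMost {X : Type*} {le : X → X → Prop} {ι : Type*} (L : ι → PLE le) (d : ℕ) : Prop :=
  ∀ x : X, ({i : ι | x ∈ (L i).dom}).ncard ≤ d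

/-- Local dimension of a poset: the least width of a local realizer. -/
noncomputable def localDim (X : Type*) [PartialOrder X] : ℕ :=
  sInf {d : ℕ | ∃ (t : ℕ) (L : Fin t → PLE ((· ≤ ·) : X → X → Prop)),
    IsLocalRealizer L ∧ WidthAtMost L d}

/-- Underlying order of the standard example `S_k`:
`a_i = inl i` are minimal, `b_j = inr j` are maximal, `a_i < b_j ↔ i ≠ j`. -/
def stdLE (k : ℕ) : Fin k ⊕ Fin k → Fin k ⊕ Fin k → Prop
  | Sum.inl i, Sum.inl j => i = j
  | Sum.inl i, Sum.inr j => i ≠ j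
  | Sum.inr i, Sum.inr j => i = j
  | Sum.inr _, Sum.inl _ => False

/-- The standard example `S_k` as a type. -/
def StdEx (k : ℕ) : Type := Fin k ⊕ Fin k

instance (k : ℕ) : PartialOrder (StdEx k) where
  le := stdLE k
  le_refl x := by rcases x with i | i <;> simp [stdLE]
  le_trans x y z hxy hyz := by
    rcases x with i | i <;> rcases y with j | j <;> rcases z with l | l <;>
      simp_all [stdLE]
  le_antisymm x y hxy hyx := by
    rcases x with i | i <;> rcases y with j | j <;> simp_all [stdLE] <;> rfl

instance (k : ℕ) : Fintype (StdEx k) := inferInstanceAs (Fintype (Fin k ⊕ Fin k))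


open Sum

lemma stdex_le_iff {k : ℕ} (x y : StdEx k) : x ≤ y ↔ stdLE k x y := Iff.rfl

/-- Full linear extension: a's ascending, then b's ascending. -/
def pleL0 (k : ℕ) : PLE ((· ≤ ·) : StdEx k → StdEx k → Prop) where
  dom := Set.univ
  rel x y := match x, y with
    | inl i, inl j => i ≤ j
    | inl _, inr _ => True
    | inr _, inl _ => False
    | inr i, inr j => i ≤ j
  mem_left _ _ _ := Set.mem_univ _
  mem_right _ _ _ := Set.mem_univ _
  refl x _ := by rcases x with i|i <;> exact le_refl i
  antisymm x y hxy hyx := by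
    rcases x with i|i <;> rcases y with j|j <;>
      first
        | exact congrArg _ (le_antisymm hxy hyx)
        | exact hxy.elim
        | exact hyx.elim
  trans x y z hxy hyz := by
    rcases x with i|i <;> rcases y with j|j <;> rcases z with l|l <;>
      first
        | exact le_trans hxy hyz
        | trivial
        | exact hxy.elim
        | exact hyz.elim
  total x _ y _ := by
    rcases x with i|i <;> rcases y with j|j <;>
      first
        | exact le_total i j
        | exact Or.inl trivial
        | exact Or.inr trivial
  le_imp x _ y _ h := by
    rw [stdex_le_iff] at h
    rcases x with i|i <;> rcases y with j|j <;>
      first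
        | exact le_of_eq h
        | trivial
        | exact h.elim

/-- Full linear extension: a's descending, then b's descending. -/
def pleL1 (k : ℕ) : PLE ((· ≤ ·) : StdEx k → StdEx k → Prop) where
  dom := Set.univ
  rel x y := match x, y with
    | inl i, inl j => j ≤ i
    | inl _, inr _ => True
    | inr _, inl _ => False
    | inr i, inr j => j ≤ i
  mem_left _ _ _ := Set.mem_univ _
  mem_right _ _ _ := Set.mem_univ _
  refl x _ := by rcases x with i|i <;> exact le_refl i
  antisymm x y hxy hyx := by
    rcases x with i|i <;> rcases y with j|j <;>
      first
        | exact congrArg _ (le_antisymm hyx hxy)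
        | exact hxy.elim
        | exact hyx.elim
  trans x y z hxy hyz := by
    rcases x with i|i <;> rcases y with j|j <;> rcases z with l|l <;>
      first
        | exact le_trans hyz hxy
        | trivial
        | exact hxy.elim
        | exact hyz.elim
  total x _ y _ := by
    rcases x with i|i <;> rcases y with j|j <;>
      first
        | exact le_total j i
        | exact Or.inl trivial
        | exact Or.inr trivial
  le_imp x _ y _ h := by
    rw [stdex_le_iff] at h
    rcases x with i|i <;> rcases y with j|j <;>
      first
        | exact le_of_eq h.symm
        | trivial
        | exact h.elim

/-- Two-element PLE putting `b_m` below `a_m`. -/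
def plePair (k : ℕ) (m : Fin k) : PLE ((· ≤ ·) : StdEx k → StdEx k → Prop) where
  dom := {inl m, inr m}
  rel x y := (x = inl m ∧ y = inl m) ∨ (x = inr m ∧ (y = inl m ∨ y = inr m))
  mem_left x y h := by
    rcases h with ⟨h1, _⟩ | ⟨h1, _⟩ <;> subst h1
    exacts [Or.inl rfl, Or.inr rfl]
  mem_right x y h := by
    rcases h with ⟨_, h2⟩ | ⟨_, h2 | h2⟩ <;> subst h2
    exacts [Or.inl rfl, Or.inl rfl, Or.inr rfl]
  refl x hx := by
    change x = inl m ∨ x = inr m at hx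
    rcases hx with h | h <;> subst h
    exacts [Or.inl ⟨rfl, rfl⟩, Or.inr ⟨rfl, Or.inr rfl⟩]
  antisymm x y hxy hyx := by
    rcases hxy with ⟨h1, h2⟩ | ⟨h1, h2⟩ <;> rcases hyx with ⟨h3, h4⟩ | ⟨h3, h4⟩ <;>
      simp_all <;> trivial
  trans x y z hxy hyz := by
    rcases hxy with ⟨h1, h2⟩ | ⟨h1, h2⟩ <;> rcases hyz with ⟨h3, h4⟩ | ⟨h3, h4⟩ <;>
      simp_all <;> trivial
  total x hx y hy := by
    change x = inl m ∨ x = inr m at hx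
    change y = inl m ∨ y = inr m at hy
    rcases hx with h | h <;> rcases hy with h' | h' <;> subst h <;> subst h'
    exacts [Or.inl (Or.inl ⟨rfl, rfl⟩), Or.inr (Or.inr ⟨rfl, Or.inl rfl⟩),
      Or.inl (Or.inr ⟨rfl, Or.inl rfl⟩), Or.inl (Or.inr ⟨rfl, Or.inr rfl⟩)]
  le_imp x hx y hy h := by
    rw [stdex_le_iff] at h
    change x = inl m ∨ x = inr m at hx
    change y = inl m ∨ y = inr m at hy
    rcases hx with h1 | h1 <;> rcases hy with h2 | h2 <;> subst h1 <;> subst h2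
    exacts [Or.inl ⟨rfl, rfl⟩, absurd rfl h, h.elim, Or.inr ⟨rfl, Or.inr rfl⟩]

/-- The width-3 local realizer family. -/
noncomputable def stdFam (k : ℕ) : Fin (k + 2) → PLE ((· ≤ ·) : StdEx k → StdEx k → Prop) :=
  fun i =>
    if h0 : (i : ℕ) = 0 then pleL0 k
    else if h1 : (i : ℕ) = 1 then pleL1 k
    else plePair k ⟨(i : ℕ) - 2, by omega⟩

theorem std_mem3 (k : ℕ) (hk : 1 ≤ k) :
    ∃ t, ∃ L : Fin t → PLE ((· ≤ ·) : StdEx k → StdEx k → Prop),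
      IsLocalRealizer L ∧ WidthAtMost L 3 := by
  refine ⟨k + 2, stdFam k, ?_, ?_⟩
  · intro x y
    constructor
    · rintro hxy i ⟨hrel, hne⟩
      have hle : (stdFam k i).rel x y :=
        (stdFam k i).le_imp x ((stdFam k i).mem_right y x hrel)
          y ((stdFam k i).mem_left y x hrel) hxy
      exact hne ((stdFam k i).antisymm y x hrel hle)
    · intro h
      by_contra hxy
      replace hxy : ¬ stdLE k x y := hxy
      rcases x with i|i <;> rcases y with j|j
      · -- a_i, a_j with i ≠ j
        have hij : i ≠ j := hxy
        rcases lt_or_gt_of_ne hij.symm with hlt | hlt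
        · refine h ⟨0, by omega⟩ ⟨?_, fun he => hij (Sum.inl.inj he).symm⟩
          show (stdFam k ⟨0, by omega⟩).rel (inl j) (inl i)
          simp only [stdFam]
          rw [dif_pos (by simp)]
          exact le_of_lt hlt
        · refine h ⟨1, by omega⟩ ⟨?_, fun he => hij (Sum.inl.inj he).symm⟩
          show (stdFam k ⟨1, by omega⟩).rel (inl j) (inl i)
          simp only [stdFam]
          rw [dif_neg (by simp), dif_pos (by simp)]
          exact le_of_lt hlt
      · -- a_i, b_j with i = j
        have hij : i = j := not_not.mp hxy
        subst hij
        refine h ⟨(i : ℕ) + 2, by omega⟩ ⟨?_, by exact Sum.inr_ne_inl⟩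
        show (stdFam k ⟨(i : ℕ) + 2, by omega⟩).rel (inr i) (inl i)
        simp only [stdFam]
        rw [dif_neg (by simp), dif_neg (by simp)]
        have hmk : (⟨(i : ℕ) + 2 - 2, by omega⟩ : Fin k) = i := Fin.ext (by simp)
        rw [hmk]
        exact Or.inr ⟨rfl, Or.inl rfl⟩
      · -- b_i, a_j : never ≤
        refine h ⟨0, by omega⟩ ⟨?_, by exact Sum.inl_ne_inr⟩
        show (stdFam k ⟨0, by omega⟩).rel (inl j) (inr i)
        simp only [stdFam]
        rw [dif_pos (by simp)]
        trivial
      · -- b_i, b_j with i ≠ j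
        have hij : i ≠ j := hxy
        rcases lt_or_gt_of_ne hij.symm with hlt | hlt
        · refine h ⟨0, by omega⟩ ⟨?_, fun he => hij (Sum.inr.inj he).symm⟩
          show (stdFam k ⟨0, by omega⟩).rel (inr j) (inr i)
          simp only [stdFam]
          rw [dif_pos (by simp)]
          exact le_of_lt hlt
        · refine h ⟨1, by omega⟩ ⟨?_, fun he => hij (Sum.inr.inj he).symm⟩
          show (stdFam k ⟨1, by omega⟩).rel (inr j) (inr i)
          simp only [stdFam]
          rw [dif_neg (by simp), dif_pos (by simp)]
          exact le_of_lt hlt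
  · -- width at most 3
    intro x
    obtain ⟨m, hm⟩ : ∃ m : Fin k, x = inl m ∨ x = inr m := by
      rcases x with i|i
      exacts [⟨i, Or.inl rfl⟩, ⟨i, Or.inr rfl⟩]
    have hsub : {i : Fin (k+2) | x ∈ (stdFam k i).dom} ⊆
        {⟨0, by omega⟩, ⟨1, by omega⟩, ⟨(m : ℕ) + 2, by omega⟩} := by
      intro i hi
      simp only [Set.mem_setOf_eq] at hi
      simp only [Set.mem_insert_iff, Set.mem_singleton_iff]
      by_cases h0 : (i : ℕ) = 0
      · left; exact Fin.ext h0
      by_cases h1 : (i : ℕ) = 1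
      · right; left; exact Fin.ext h1
      right; right
      simp only [stdFam, dif_neg h0, dif_neg h1, plePair,
        Set.mem_insert_iff, Set.mem_singleton_iff] at hi
      have hmi : (m : ℕ) = (i : ℕ) - 2 := by
        rcases hm with h | h <;> rw [h] at hi <;> rcases hi with h' | h'
        · exact congrArg Fin.val (Sum.inl.inj h')
        · exact ((Sum.inl_ne_inr) h').elim
        · exact ((Sum.inr_ne_inl) h').elim
        · exact congrArg Fin.val (Sum.inr.inj h')
      exact Fin.ext (by simp [← hmi]; omega)
    calc ({i : Fin (k+2) | x ∈ (stdFam k i).dom}).ncard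
        ≤ _ := Set.ncard_le_ncard hsub (Set.toFinite _)
      _ ≤ 3 := by
          refine le_trans (Set.ncard_insert_le _ _) ?_
          have h2 := Set.ncard_insert_le (⟨1, by omega⟩ : Fin (k+2))
            ({⟨(m : ℕ) + 2, by omega⟩} : Set (Fin (k+2)))
          simp only [Set.ncard_singleton] at h2
          omega

theorem localDim_std_ge (k : ℕ) (hk : 3 ≤ k) (d : ℕ)
    (hd : ∃ t, ∃ L : Fin t → PLE ((· ≤ ·) : StdEx k → StdEx k → Prop),
      IsLocalRealizer L ∧ WidthAtMost L d) : 3 ≤ d := by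
  by_contra hlt
  have hd2 : d ≤ 2 := by omega
  obtain ⟨t, L, hR, hW⟩ := hd
  have key : ∀ x y : StdEx k, ¬ x ≤ y → ∃ m, (L m).rel y x := by
    intro x y hxy
    by_contra h
    push_neg at h
    exact hxy ((hR x y).2 (fun i hi => (h i) hi.1))
  set p0 : Fin k := ⟨0, by omega⟩
  set p1 : Fin k := ⟨1, by omega⟩
  set p2 : Fin k := ⟨2, by omega⟩
  have h01 : p0 ≠ p1 := by simp [p0, p1, Fin.ext_iff]
  have h02 : p0 ≠ p2 := by simp [p0, p2, Fin.ext_iff]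
  have h12 : p1 ≠ p2 := by simp [p1, p2, Fin.ext_iff]
  have aRev : ∀ p q : Fin k, p ≠ q → ∃ m, (L m).rel (Sum.inl q) (Sum.inl p) := by
    intro p q hpq
    exact key (Sum.inl p) (Sum.inl q) (by exact hpq)
  have hDcard : ∀ p : Fin k,
      ({m : Fin t | (Sum.inl p : StdEx k) ∈ (L m).dom}).ncard ≤ 2 :=
    fun p => le_trans (hW (Sum.inl p)) hd2
  have pairDom : ∀ p q : Fin k, p ≠ q → ∃ m m' : Fin t, m ≠ m' ∧
      ({m, m'} : Set (Fin t)) = {n : Fin t | (Sum.inl p : StdEx k) ∈ (L n).dom} ∧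
      ({m, m'} : Set (Fin t)) = {n : Fin t | (Sum.inl q : StdEx k) ∈ (L n).dom} := by
    intro p q hpq
    obtain ⟨m, hm⟩ := aRev p q hpq
    obtain ⟨m', hm'⟩ := aRev q p hpq.symm
    have hne : m ≠ m' := by
      rintro rfl
      have := (L m).antisymm _ _ hm hm'
      exact hpq (Sum.inl.inj this).symm
    have hsubp : ({m, m'} : Set (Fin t)) ⊆ {n : Fin t | (Sum.inl p : StdEx k) ∈ (L n).dom} := by
      rintro x (rfl | rfl)
      · exact (L x).mem_right _ _ hm
      · exact (L x).mem_left _ _ hm'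
    have hsubq : ({m, m'} : Set (Fin t)) ⊆ {n : Fin t | (Sum.inl q : StdEx k) ∈ (L n).dom} := by
      rintro x (rfl | rfl)
      · exact (L x).mem_left _ _ hm
      · exact (L x).mem_right _ _ hm'
    have h2 : ({m, m'} : Set (Fin t)).ncard = 2 := Set.ncard_pair hne
    exact ⟨m, m', hne,
      Set.eq_of_subset_of_ncard_le hsubp (by rw [h2]; exact hDcard p) (Set.toFinite _),
      Set.eq_of_subset_of_ncard_le hsubq (by rw [h2]; exact hDcard q) (Set.toFinite _)⟩
  obtain ⟨m, m', hmm', e0, e1⟩ := pairDom p0 p1 h01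
  obtain ⟨u, u', huu', f0, f2⟩ := pairDom p0 p2 h02
  have e2 : ({m, m'} : Set (Fin t)) = {n : Fin t | (Sum.inl p2 : StdEx k) ∈ (L n).dom} := by
    rw [e0, ← f0, f2]
  have bRev : ∀ p : Fin k, ∃ n, (L n).rel (Sum.inr p) (Sum.inl p) := by
    intro p
    exact key (Sum.inl p) (Sum.inr p) (by exact fun h => h rfl)
  obtain ⟨n0, hn0⟩ := bRev p0
  obtain ⟨n1, hn1⟩ := bRev p1
  obtain ⟨n2, hn2⟩ := bRev p2
  have mem0 : n0 ∈ ({m, m'} : Set (Fin t)) := by rw [e0]; exact (L n0).mem_right _ _ hn0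
  have mem1 : n1 ∈ ({m, m'} : Set (Fin t)) := by rw [e1]; exact (L n1).mem_right _ _ hn1
  have mem2 : n2 ∈ ({m, m'} : Set (Fin t)) := by rw [e2]; exact (L n2).mem_right _ _ hn2
  have contra : ∀ (n : Fin t) (p q : Fin k), p ≠ q →
      (L n).rel (Sum.inr p) (Sum.inl p) → (L n).rel (Sum.inr q) (Sum.inl q) → False := by
    intro n p q hpq h1 h2
    have r1 : (L n).rel (Sum.inl p) (Sum.inr q) :=
      (L n).le_imp _ ((L n).mem_right _ _ h1) _ ((L n).mem_left _ _ h2)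
        (by exact hpq)
    have r2 : (L n).rel (Sum.inl q) (Sum.inr p) :=
      (L n).le_imp _ ((L n).mem_right _ _ h2) _ ((L n).mem_left _ _ h1)
        (by exact hpq.symm)
    have t1 : (L n).rel (Sum.inr p) (Sum.inr q) := (L n).trans _ _ _ h1 r1
    have t2 : (L n).rel (Sum.inr q) (Sum.inr p) := (L n).trans _ _ _ h2 r2
    have := (L n).antisymm _ _ t1 t2
    exact hpq (Sum.inr.inj this)
  rcases mem0 with h0 | h0 <;> rcases mem1 with h1 | h1 <;> rcases mem2 with h2 | h2 <;>
    subst h0 <;> subst h1 <;> subst h2 <;>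
    first
      | exact contra _ p0 p1 h01 hn0 hn1
      | exact contra _ p0 p2 h02 hn0 hn2
      | exact contra _ p1 p2 h12 hn1 hn2


/-- For every `k ≥ 3`, the standard example `S_k` has local dimension
exactly `3`. -/
theorem local_dim_standard_example (k : ℕ) (hk : 3 ≤ k) : localDim (StdEx k) = 3 := by
  have h3 := std_mem3 k (by omega)
  refine le_antisymm (Nat.sInf_le h3) (le_csInf ⟨3, h3⟩ ?_)
  intro d hd
  exact localDim_std_ge k hk d hd
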